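/- Let X be a topological space with a Radon measure μ, and let H ⊆ X² be a reflexive, transitive, compact-valued, strongly surjective, and μ-continuous relation. Let L₀ ≥ 0 and t₀ ∈ X satisfy L₀ · ρ_{H,μ}(t₀) < 1. Then the integral equation ℓ(t) = 1 + L₀ ∫_{H(t)} ℓ(s) dμ(s) has a continuous, everywhere positive solution ℓ : H(t₀) → ℝ₊ (in fact ℓ ≥ 1). -/

import Mathlib

open MeasureTheory
open scoped ENNReal

/-- The set-valued map induced by a relation `H ⊆ X²`: `H(t) = {s | (t,s) ∈ H}`. -/
def relImg {X : Type*} (H : Set (X × X)) (t : X) : Set X := {s | (t, s) ∈ H}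

/-- The iterates `Λ_{H,μ}^k 𝟏` of the core map `(Λ_{H,μ} x)(t) = ∫_{H(t)} x dμ`
applied to the constant function `𝟏`. -/
noncomputable def coreIter {X : Type*} [MeasurableSpace X] (μ : Measure X)
    (H : Set (X × X)) : ℕ → X → ℝ
  | 0 => fun _ => 1
  | (k + 1) => fun t => ∫ s in relImg H t, coreIter μ H k s ∂μ

/-- The spectral radius function of the core map `Λ_{H,μ}`:
`ρ_{H,μ}(t) = limsup_{k→∞} ((Λ_{H,μ}^k 𝟏)(t))^{1/k}`. -/
noncomputable def specRad {X : Type*} [MeasurableSpace X] (μ : Measure X)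
    (H : Set (X × X)) (t : X) : ℝ :=
  Filter.limsup (fun k : ℕ => (coreIter μ H k t) ^ ((1 : ℝ) / (k : ℝ))) Filter.atTop

section Helpers

variable {X : Type*} [TopologicalSpace X] [MeasurableSpace X] [BorelSpace X]

lemma ae_restrict_mem_of_subset {μ : Measure X} {A M : Set X} (hM : MeasurableSet M)
    (h : A ⊆ M) : ∀ᵐ x ∂μ.restrict A, x ∈ M := by
  rw [Filter.eventually_iff, mem_ae_iff]
  have h1 : {x | x ∈ M}ᶜ = Mᶜ := rfl
  rw [h1, Measure.restrict_apply hM.compl]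
  have h2 : Mᶜ ∩ A = ∅ := by
    ext x; simp only [Set.mem_inter_iff, Set.mem_compl_iff, Set.mem_empty_iff_false, iff_false]
    rintro ⟨hx, hxA⟩; exact hx (h hxA)
  simp [h2]

lemma integrableOn_of_bound {μ : Measure X} {f : X → ℝ} (hf : Continuous f) (A : Set X)
    (hA : μ A ≠ ∞) (C : ℝ) (h : ∀ x ∈ A, |f x| ≤ C) : IntegrableOn f A μ := by
  haveI : IsFiniteMeasure (μ.restrict A) := by
    constructor; rwa [Measure.restrict_apply_univ, lt_top_iff_ne_top]
  have hM : MeasurableSet {x | |f x| ≤ C} :=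
    measurableSet_le (hf.abs.measurable) measurable_const
  refine (integrable_const C).mono' hf.aestronglyMeasurable ?_
  filter_upwards [ae_restrict_mem_of_subset hM (fun x hx => h x hx)] with x hx
  simpa [Real.norm_eq_abs] using hx

lemma setIntegral_diff_bound {μ : Measure X} {f : X → ℝ} (hf : Continuous f)
    {A B S : Set X} (hAS : A ⊆ S) (hBS : B ⊆ S) (hS : μ S ≠ ∞)
    {C : ℝ} (hf0 : ∀ x, 0 ≤ f x) (hC : ∀ x ∈ S, f x ≤ C) :
    ∫ x in A, f x ∂μ ≤ (∫ x in B, f x ∂μ) + C * (μ (A \ B)).toReal := by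
  have habs : ∀ x ∈ S, |f x| ≤ C := fun x hx => by
    rw [abs_of_nonneg (hf0 x)]; exact hC x hx
  have hμAB : μ (A ∩ B) ≠ ∞ :=
    ne_top_of_le_ne_top hS (measure_mono (fun x hx => hAS hx.1))
  have hμAdB : μ (A \ B) ≠ ∞ :=
    ne_top_of_le_ne_top hS (measure_mono (fun x hx => hAS hx.1))
  have hμB : μ B ≠ ∞ := ne_top_of_le_ne_top hS (measure_mono hBS)
  have hi1 : IntegrableOn f (A ∩ B) μ :=
    integrableOn_of_bound hf _ hμAB C (fun x hx => habs x (hAS hx.1))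
  have hi2 : IntegrableOn f (A \ B) μ :=
    integrableOn_of_bound hf _ hμAdB C (fun x hx => habs x (hAS hx.1))
  have hiB : IntegrableOn f B μ :=
    integrableOn_of_bound hf _ hμB C (fun x hx => habs x (hBS hx))
  have hle : μ.restrict A ≤ μ.restrict (A ∩ B) + μ.restrict (A \ B) := by
    refine Measure.le_iff.2 (fun s hs => ?_)
    rw [Measure.coe_add, Pi.add_apply, Measure.restrict_apply hs, Measure.restrict_apply hs,
      Measure.restrict_apply hs]
    refine le_trans (measure_mono ?_) (measure_union_le _ _)
    rintro x ⟨hxs, hxA⟩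
    by_cases hB : x ∈ B
    · exact Or.inl ⟨hxs, hxA, hB⟩
    · exact Or.inr ⟨hxs, hxA, hB⟩
  have hadd : Integrable f (μ.restrict (A ∩ B) + μ.restrict (A \ B)) :=
    Integrable.add_measure hi1 hi2
  have h1 : ∫ x in A, f x ∂μ ≤ ∫ x, f x ∂(μ.restrict (A ∩ B) + μ.restrict (A \ B)) :=
    integral_mono_measure hle (Filter.Eventually.of_forall hf0) hadd
  rw [integral_add_measure hi1 hi2] at h1
  have h2 : ∫ x in A ∩ B, f x ∂μ ≤ ∫ x in B, f x ∂μ :=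
    integral_mono_measure (Measure.restrict_mono Set.inter_subset_right le_rfl)
      (Filter.Eventually.of_forall hf0) hiB
  have h3 : ∫ x in A \ B, f x ∂μ ≤ C * (μ (A \ B)).toReal := by
    have hM : MeasurableSet {x | f x ≤ C} := measurableSet_le hf.measurable measurable_const
    have hce : ∫ x in A \ B, f x ∂μ ≤ ∫ _x in A \ B, C ∂μ := by
      refine integral_mono_ae hi2 (integrableOn_const hμAdB) ?_
      exact ae_restrict_mem_of_subset hM (fun x hx => hC x (hAS hx.1))
    calc ∫ x in A \ B, f x ∂μ ≤ ∫ _x in A \ B, C ∂μ := hce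
      _ = (μ (A \ B)).toReal * C := by rw [integral_const]; simp [Measure.real, Measure.restrict_apply_univ]
      _ = C * (μ (A \ B)).toReal := mul_comm _ _
  linarith

lemma coreIter_nonneg (μ : Measure X) (H : Set (X × X)) :
    ∀ k t, 0 ≤ coreIter μ H k t
  | 0, _t => zero_le_one
  | (k + 1), _t => integral_nonneg (fun x => coreIter_nonneg μ H k x)

lemma coreIter_continuous (μ : Measure X) [μ.Regular] (H : Set (X × X))
    (htrans : ∀ t s u : X, (t, s) ∈ H → (s, u) ∈ H → (t, u) ∈ H)
    (hcomp : ∀ t : X, IsCompact (relImg H t))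
    (hsurj : (⋃ t : X, interior (relImg H t)) = Set.univ)
    (hμcont : ∀ t₀ : X, ∀ ε : ℝ≥0∞, 0 < ε → ∃ U ∈ nhds t₀, ∀ t ∈ U,
      μ ((relImg H t \ relImg H t₀) ∪ (relImg H t₀ \ relImg H t)) < ε) :
    ∀ k, Continuous (coreIter μ H k) := by
  intro k
  induction k with
  | zero => exact continuous_const
  | succ k ih =>
    rw [continuous_iff_continuousAt]
    intro t₁
    -- find u with t₁ ∈ interior (relImg H u)
    have ht₁ : t₁ ∈ ⋃ t : X, interior (relImg H t) := by rw [hsurj]; trivial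
    obtain ⟨u, hu⟩ := Set.mem_iUnion.1 ht₁
    set S := relImg H u with hS
    have hScomp : IsCompact S := hcomp u
    have hSfin : μ S ≠ ∞ := hScomp.measure_lt_top.ne
    set f := coreIter μ H k with hf
    have hfc : Continuous f := ih
    have hf0 : ∀ x, 0 ≤ f x := coreIter_nonneg μ H k
    -- bound of f on S
    obtain ⟨x₀, _hx₀, hmax⟩ := hScomp.exists_isMaxOn ⟨t₁, interior_subset hu⟩ hfc.continuousOn
    set C := max (f x₀) 0 with hC
    have hCnn : 0 ≤ C := le_max_right _ _
    have hCb : ∀ x ∈ S, f x ≤ C := fun x hx => le_trans (hmax hx) (le_max_left _ _)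
    have hsub : ∀ t ∈ interior S, relImg H t ⊆ S := by
      intro t ht x hx
      exact htrans u t x (show t ∈ S from interior_subset ht) hx
    have key : ContinuousAt (fun t => ∫ x in relImg H t, f x ∂μ) t₁ := by
      rw [ContinuousAt, Metric.tendsto_nhds]
      intro ε hε
      have hεC : 0 < ε / (2 * C + 1) := by positivity
      obtain ⟨U, hU, hUp⟩ := hμcont t₁ (ENNReal.ofReal (ε / (2 * C + 1)))
        (ENNReal.ofReal_pos.2 hεC)
      have hmem : U ∩ interior S ∈ nhds t₁ :=
        Filter.inter_mem hU (isOpen_interior.mem_nhds hu)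
      filter_upwards [hmem] with t ⟨htU, htS⟩
      have hA : relImg H t ⊆ S := hsub t htS
      have hB : relImg H t₁ ⊆ S := hsub t₁ hu
      have hd := hUp t htU
      have hd1 : μ (relImg H t \ relImg H t₁) < ENNReal.ofReal (ε / (2 * C + 1)) :=
        lt_of_le_of_lt (measure_mono Set.subset_union_left) hd
      have hd2 : μ (relImg H t₁ \ relImg H t) < ENNReal.ofReal (ε / (2 * C + 1)) :=
        lt_of_le_of_lt (measure_mono Set.subset_union_right) hd
      have hb1 : (μ (relImg H t \ relImg H t₁)).toReal ≤ ε / (2 * C + 1) := by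
        rw [← ENNReal.toReal_ofReal hεC.le]
        exact ENNReal.toReal_mono ENNReal.ofReal_ne_top hd1.le
      have hb2 : (μ (relImg H t₁ \ relImg H t)).toReal ≤ ε / (2 * C + 1) := by
        rw [← ENNReal.toReal_ofReal hεC.le]
        exact ENNReal.toReal_mono ENNReal.ofReal_ne_top hd2.le
      have e1 := setIntegral_diff_bound hfc hA hB hSfin hf0 hCb
      have e2 := setIntegral_diff_bound hfc hB hA hSfin hf0 hCb
      have hCe : C * (ε / (2 * C + 1)) < ε := by
        have hpos : (0:ℝ) < 2 * C + 1 := by positivity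
        have heq : C * (ε / (2 * C + 1)) = C * ε / (2 * C + 1) := by ring
        rw [heq, div_lt_iff₀ hpos]
        nlinarith
      rw [Real.dist_eq, abs_sub_lt_iff]
      constructor
      · nlinarith [mul_le_mul_of_nonneg_left hb1 hCnn]
      · nlinarith [mul_le_mul_of_nonneg_left hb2 hCnn]
    exact key

lemma exists_bound_on_compact {f : X → ℝ} (hf : Continuous f) {S : Set X}
    (hS : IsCompact S) (hne : S.Nonempty) : ∃ C : ℝ, 0 ≤ C ∧ ∀ x ∈ S, |f x| ≤ C := by
  obtain ⟨x₀, _, hmax⟩ := hS.exists_isMaxOn hne hf.abs.continuousOn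
  exact ⟨max |f x₀| 0, le_max_right _ _, fun x hx => le_trans (hmax hx) (le_max_left _ _)⟩

lemma coreIter_mono (μ : Measure X) [μ.Regular] (H : Set (X × X))
    (hrefl : ∀ t : X, (t, t) ∈ H)
    (htrans : ∀ t s u : X, (t, s) ∈ H → (s, u) ∈ H → (t, u) ∈ H)
    (hcomp : ∀ t : X, IsCompact (relImg H t))
    (hsurj : (⋃ t : X, interior (relImg H t)) = Set.univ)
    (hμcont : ∀ t₀ : X, ∀ ε : ℝ≥0∞, 0 < ε → ∃ U ∈ nhds t₀, ∀ t ∈ U,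
      μ ((relImg H t \ relImg H t₀) ∪ (relImg H t₀ \ relImg H t)) < ε)
    (t₀ : X) : ∀ k, ∀ t ∈ relImg H t₀, coreIter μ H k t ≤ coreIter μ H k t₀ := by
  intro k
  cases k with
  | zero => intro t _; exact le_rfl
  | succ k =>
    intro t ht
    have hsub : relImg H t ⊆ relImg H t₀ := fun x hx => htrans t₀ t x ht hx
    have hfc : Continuous (coreIter μ H k) := coreIter_continuous μ H htrans hcomp hsurj hμcont k
    obtain ⟨C, hC0, hCb⟩ := exists_bound_on_compact hfc (hcomp t₀) ⟨t₀, hrefl t₀⟩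
    have hfin : μ (relImg H t₀) ≠ ∞ := (hcomp t₀).measure_lt_top.ne
    have hint : IntegrableOn (coreIter μ H k) (relImg H t₀) μ :=
      integrableOn_of_bound hfc _ hfin C hCb
    exact integral_mono_measure (Measure.restrict_mono hsub le_rfl)
      (Filter.Eventually.of_forall (coreIter_nonneg μ H k)) hint

end Helpers

/-- Let `X` be a topological space with a Radon measure `μ` and let `H ⊆ X²` be a reflexive,
transitive, compact-valued, strongly surjective and `μ`-continuous relation. If `L₀ ≥ 0` and
`t₀ ∈ X` satisfy `L₀ · ρ_{H,μ}(t₀) < 1`, then the integral equation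
`ℓ(t) = 1 + L₀ ∫_{H(t)} ℓ(s) dμ(s)` has a continuous positive (in fact `≥ 1`) solution
on `H(t₀)`. -/
theorem linear_integral_equation_solvable {X : Type*} [TopologicalSpace X] [MeasurableSpace X]
    [BorelSpace X] (μ : Measure X) [μ.Regular]
    (H : Set (X × X))
    (hrefl : ∀ t : X, (t, t) ∈ H)
    (htrans : ∀ t s u : X, (t, s) ∈ H → (s, u) ∈ H → (t, u) ∈ H)
    (hcomp : ∀ t : X, IsCompact (relImg H t))
    (hsurj : (⋃ t : X, interior (relImg H t)) = Set.univ)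
    (hμcont : ∀ t₀ : X, ∀ ε : ℝ≥0∞, 0 < ε → ∃ U ∈ nhds t₀, ∀ t ∈ U,
      μ ((relImg H t \ relImg H t₀) ∪ (relImg H t₀ \ relImg H t)) < ε)
    (L₀ : ℝ) (hL₀ : 0 ≤ L₀) (t₀ : X) (hspec : L₀ * specRad μ H t₀ < 1) :
    ∃ ℓ : X → ℝ, ContinuousOn ℓ (relImg H t₀) ∧
      (∀ t ∈ relImg H t₀, 0 < ℓ t) ∧
      (∀ t ∈ relImg H t₀, 1 ≤ ℓ t) ∧
      (∀ t ∈ relImg H t₀, ℓ t = 1 + L₀ * ∫ s in relImg H t, ℓ s ∂μ) := by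
  rcases eq_or_lt_of_le hL₀ with h0 | hpos
  · refine ⟨fun _ => 1, continuousOn_const, fun t _ => one_pos, fun t _ => le_rfl,
      fun t _ => by simp [← h0]⟩
  -- L₀ > 0 from here on
  set K := relImg H t₀ with hK
  have hKc : IsCompact K := hcomp t₀
  have hKfin : μ K ≠ ∞ := hKc.measure_lt_top.ne
  have hfc : ∀ k, Continuous (coreIter μ H k) := coreIter_continuous μ H htrans hcomp hsurj hμcont
  have hnn := coreIter_nonneg μ H
  have hmono := coreIter_mono μ H hrefl htrans hcomp hsurj hμcont t₀
  set a : ℕ → ℝ := fun k => coreIter μ H k t₀ with ha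
  have ha0 : ∀ k, 0 ≤ a k := fun k => hnn k t₀
  set M := max (μ K).toReal 1 with hM
  have hM1 : 1 ≤ M := le_max_right _ _
  have hM0 : 0 ≤ M := zero_le_one.trans hM1
  have haM : ∀ k, a k ≤ M ^ k := by
    intro k; induction k with
    | zero => simp [ha]; rfl
    | succ k ih =>
      have hb : ∀ x ∈ K, coreIter μ H k x ≤ M ^ k := fun x hx => (hmono k x hx).trans ih
      have hMeas : MeasurableSet {x | coreIter μ H k x ≤ M ^ k} :=
        measurableSet_le (hfc k).measurable measurable_const
      have hint : IntegrableOn (coreIter μ H k) K μ := by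
        obtain ⟨C, _hC0, hCb⟩ := exists_bound_on_compact (hfc k) hKc ⟨t₀, hrefl t₀⟩
        exact integrableOn_of_bound (hfc k) _ hKfin C hCb
      have hstep : a (k + 1) = ∫ x in K, coreIter μ H k x ∂μ := rfl
      rw [hstep]
      calc ∫ x in K, coreIter μ H k x ∂μ ≤ ∫ _x in K, M ^ k ∂μ := by
            refine integral_mono_ae hint (integrableOn_const hKfin) ?_
            exact ae_restrict_mem_of_subset hMeas hb
        _ = (μ K).toReal * M ^ k := by rw [integral_const]; simp [Measure.real, Measure.restrict_apply_univ]
        _ ≤ M * M ^ k :=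
            mul_le_mul_of_nonneg_right (le_max_left _ _) (pow_nonneg hM0 k)
        _ = M ^ (k + 1) := by ring
  set s : ℕ → ℝ := fun k => (a k) ^ ((1 : ℝ) / (k : ℝ)) with hsdef
  have hs0 : ∀ k, 0 ≤ s k := fun k => Real.rpow_nonneg (ha0 k) _
  have hsM : ∀ k, s k ≤ M := by
    intro k
    cases k with
    | zero =>
      have : s 0 = 1 := by
        show (a 0) ^ ((1 : ℝ) / ((0:ℕ) : ℝ)) = 1
        have : a 0 = 1 := rfl
        rw [this, Real.one_rpow]
      rw [this]; exact hM1
    | succ k =>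
      have hkpos : (0:ℝ) < ((k+1 : ℕ) : ℝ) := by positivity
      have h1 : s (k+1) ≤ (M ^ (k+1)) ^ ((1:ℝ)/((k+1 : ℕ) : ℝ)) :=
        Real.rpow_le_rpow (ha0 _) (haM _) (by positivity)
      have h2 : (M ^ (k+1) : ℝ) ^ ((1:ℝ)/((k+1 : ℕ) : ℝ)) = M := by
        rw [← Real.rpow_natCast M (k+1), ← Real.rpow_mul hM0]
        rw [mul_one_div, div_self (ne_of_gt hkpos), Real.rpow_one]
      rw [h2] at h1; exact h1
  have hbdd : Filter.IsBoundedUnder (· ≤ ·) Filter.atTop s :=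
    Filter.isBoundedUnder_of ⟨M, hsM⟩
  have hρ : specRad μ H t₀ = Filter.limsup s Filter.atTop := rfl
  have hρlt : specRad μ H t₀ < 1 / L₀ := by
    rw [lt_div_iff₀ hpos, mul_comm]; exact hspec
  set c := (specRad μ H t₀ + 1 / L₀) / 2 with hc
  have hc1 : specRad μ H t₀ < c := by rw [hc]; linarith
  have hc2 : c < 1 / L₀ := by rw [hc]; linarith
  have hev : ∀ᶠ k in Filter.atTop, s k < c :=
    Filter.eventually_lt_of_limsup_lt (by rw [← hρ]; exact hc1) hbdd
  have hc0 : 0 < c := by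
    obtain ⟨k, hk⟩ := hev.exists
    exact lt_of_le_of_lt (hs0 k) hk
  have hr1 : L₀ * c < 1 := by
    have := (lt_div_iff₀ hpos).1 hc2
    linarith [mul_comm c L₀]
  have hr0 : 0 ≤ L₀ * c := mul_nonneg hL₀ hc0.le
  obtain ⟨N, hN⟩ := Filter.eventually_atTop.1 hev
  have hack : ∀ k ≥ N, a k ≤ c ^ k := by
    intro k hk
    cases k with
    | zero => show a 0 ≤ 1; exact le_of_eq rfl
    | succ m =>
      have hsk := hN _ hk
      have hmpos : ((m+1 : ℕ) : ℝ) ≠ 0 := by positivity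
      have key : a (m+1) = (s (m+1)) ^ (m+1) := by
        show a (m+1) = ((a (m+1)) ^ ((1:ℝ)/((m+1 : ℕ) : ℝ))) ^ (m+1)
        rw [← Real.rpow_natCast ((a (m+1)) ^ ((1:ℝ)/((m+1 : ℕ) : ℝ))) (m+1),
          ← Real.rpow_mul (ha0 _), one_div_mul_cancel hmpos, Real.rpow_one]
      rw [key]
      exact pow_le_pow_left₀ (hs0 _) hsk.le (m+1)
  set u : ℕ → ℝ := fun k => L₀ ^ k * a k with hu
  have hu0 : ∀ k, 0 ≤ u k := fun k => mul_nonneg (pow_nonneg hL₀ k) (ha0 k)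
  have husum : Summable u := by
    rw [← summable_nat_add_iff N]
    have hgeo : Summable (fun n : ℕ => (L₀ * c) ^ N * (L₀ * c) ^ n) :=
      (summable_geometric_of_lt_one hr0 hr1).mul_left _
    refine Summable.of_nonneg_of_le (fun n => hu0 _) (fun n => ?_) hgeo
    have h1 : u (n + N) ≤ L₀ ^ (n + N) * c ^ (n + N) :=
      mul_le_mul_of_nonneg_left (hack _ (Nat.le_add_left N n)) (pow_nonneg hL₀ _)
    calc u (n + N) ≤ L₀ ^ (n + N) * c ^ (n + N) := h1
      _ = (L₀ * c) ^ (n + N) := (mul_pow _ _ _).symm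
      _ = (L₀ * c) ^ N * (L₀ * c) ^ n := by rw [← pow_add]; ring_nf
  set g : ℕ → X → ℝ := fun k x => L₀ ^ k * coreIter μ H k x with hg
  have hg0 : ∀ k x, 0 ≤ g k x := fun k x => mul_nonneg (pow_nonneg hL₀ k) (hnn k x)
  have hgb : ∀ k, ∀ x ∈ K, ‖g k x‖ ≤ u k := by
    intro k x hx
    rw [Real.norm_eq_abs, abs_of_nonneg (hg0 k x)]
    exact mul_le_mul_of_nonneg_left (hmono k x hx) (pow_nonneg hL₀ k)
  have hgc : ∀ k, Continuous (g k) := fun k => continuous_const.mul (hfc k)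
  set ℓ : X → ℝ := fun x => ∑' k, g k x with hℓ
  have hsumx : ∀ x ∈ K, Summable (fun k => g k x) := by
    intro x hx
    refine Summable.of_nonneg_of_le (fun k => hg0 k x) (fun k => ?_) husum
    have := hgb k x hx
    rwa [Real.norm_eq_abs, abs_of_nonneg (hg0 k x)] at this
  have hcont : ContinuousOn ℓ K := by
    have huc := tendstoUniformlyOn_tsum_nat husum (fun k x hx => hgb k x hx)
    exact huc.continuousOn (Filter.Eventually.frequently (Filter.Eventually.of_forall (fun n =>
      (continuous_finset_sum _ (fun i _ => hgc i)).continuousOn)))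
  have hge1 : ∀ t ∈ K, 1 ≤ ℓ t := by
    intro t ht
    have h0 : g 0 t = 1 := by show L₀ ^ 0 * coreIter μ H 0 t = 1; simp; rfl
    have := Summable.le_tsum (hsumx t ht) 0 (fun j _ => hg0 j t)
    rwa [h0] at this
  refine ⟨ℓ, hcont, fun t ht => lt_of_lt_of_le one_pos (hge1 t ht), hge1, ?_⟩
  intro t ht
  set A := relImg H t with hA
  have hAK : A ⊆ K := fun x hx => htrans t₀ t x ht hx
  have hAfin : μ A ≠ ∞ := ne_top_of_le_ne_top hKfin (measure_mono hAK)
  -- swap sum and integral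
  have hswap : ∫ x in A, ℓ x ∂μ = ∑' k, ∫ x in A, g k x ∂μ := by
    refine integral_tsum (fun k => (hgc k).aestronglyMeasurable) ?_
    have hbound : ∀ k, ∫⁻ x, ‖g k x‖₊ ∂(μ.restrict A) ≤ ENNReal.ofReal (u k) * μ A := by
      intro k
      have hMeas : MeasurableSet {x | ‖g k x‖ ≤ u k} :=
        measurableSet_le (hgc k).norm.measurable measurable_const
      have hae : ∀ᵐ x ∂(μ.restrict A), (‖g k x‖₊ : ℝ≥0∞) ≤ ENNReal.ofReal (u k) := by
        filter_upwards [ae_restrict_mem_of_subset hMeas (fun x hx => hgb k x (hAK hx))] with x hx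
        rw [← ENNReal.ofReal_coe_nnreal, coe_nnnorm]
        exact ENNReal.ofReal_le_ofReal hx
      calc ∫⁻ x, ‖g k x‖₊ ∂(μ.restrict A) ≤ ∫⁻ _x, ENNReal.ofReal (u k) ∂(μ.restrict A) :=
            lintegral_mono_ae hae
        _ = ENNReal.ofReal (u k) * μ A := by
            rw [lintegral_const, Measure.restrict_apply_univ]
    refine ne_top_of_le_ne_top ?_ (ENNReal.tsum_le_tsum hbound)
    rw [ENNReal.tsum_mul_right, ← ENNReal.ofReal_tsum_of_nonneg hu0 husum]
    exact ENNReal.mul_ne_top ENNReal.ofReal_ne_top hAfin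
  have hterm : ∀ k, ∫ x in A, g k x ∂μ = L₀ ^ k * coreIter μ H (k+1) t := by
    intro k
    show ∫ x in A, L₀ ^ k * coreIter μ H k x ∂μ = _
    rw [integral_const_mul]
    rfl
  have hshift : ℓ t = 1 + ∑' k, g (k+1) t := by
    rw [hℓ]
    show ∑' k, g k t = 1 + ∑' k, g (k+1) t
    rw [Summable.tsum_eq_zero_add (hsumx t (hAK (hrefl t)))]
    congr 1
    show L₀ ^ 0 * coreIter μ H 0 t = 1
    simp; rfl
  rw [hshift, hswap]
  congr 1
  rw [← tsum_mul_left]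
  congr 1
  ext k
  rw [hterm k]
  show L₀ ^ (k+1) * coreIter μ H (k+1) t = L₀ * (L₀ ^ k * coreIter μ H (k+1) t)
  ring
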